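/- Let ρ₁, ρ₂, ρ₃ be 2×2 complex density matrices, let {v₁, v₂} be an orthonormal basis of ℂ², and let P^B be a 2×3 row-stochastic real matrix. Define p(k|i) = ∑_{j=1}^{2} ⟨v_j, ρ_i v_j⟩ P^B(j,k). Suppose p(i|i) = 0 for all i ∈ {1,2,3} and set γ_k = (1/3)·∑_{i=1}^{3} p(k|i). Then there exists an index j with γ_j = 0 or γ_j = 2/3. -/

import Mathlib

open Matrix ComplexOrder

/-- A real matrix is row-stochastic if all entries are nonnegative and each row sums to 1. -/
def RowStochastic {m n : ℕ} (P : Matrix (Fin m) (Fin n) ℝ) : Prop :=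
  (∀ i j, 0 ≤ P i j) ∧ ∀ i, ∑ j, P i j = 1

lemma key_gamma (a b r0 γ : Fin 3 → ℝ)
    (hsa : ∑ k, a k = 1) (hsb : ∑ k, b k = 1)
    (hza : ∀ i, r0 i * a i = 0) (hzb : ∀ i, (1 - r0 i) * b i = 0)
    (hγ : ∀ k, 3 * γ k = ∑ i, (r0 i * a k + (1 - r0 i) * b k)) :
    ∃ j, γ j = 0 ∨ γ j = 2/3 := by
  simp only [Fin.sum_univ_three] at hγ hsa hsb
  by_cases h0 : ∃ l, a l = 0 ∧ b l = 0
  · obtain ⟨l, hal, hbl⟩ := h0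
    refine ⟨l, Or.inl ?_⟩
    have h := hγ l
    rw [hal, hbl] at h
    linarith
  · push_neg at h0
    have hr : ∀ i, (a i = 0 ∧ r0 i = 1) ∨ (b i = 0 ∧ r0 i = 0) := by
      intro i
      by_cases hai : a i = 0
      · left
        refine ⟨hai, ?_⟩
        have hbi := h0 i hai
        rcases mul_eq_zero.mp (hzb i) with h' | h'
        · linarith
        · exact absurd h' hbi
      · right
        rcases mul_eq_zero.mp (hza i) with h' | h'
        · have hb : b i = 0 := by
            rcases mul_eq_zero.mp (hzb i) with h'' | h''
            · linarith
            · exact h''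
          exact ⟨hb, h'⟩
        · exact absurd h' hai
    rcases hr 0 with ⟨e0, f0⟩ | ⟨e0, f0⟩ <;>
      rcases hr 1 with ⟨e1, f1⟩ | ⟨e1, f1⟩ <;>
        rcases hr 2 with ⟨e2, f2⟩ | ⟨e2, f2⟩ <;>
          simp only [e0, e1, e2, f0, f1, f2] at hγ hsa hsb
    · exact absurd hsa (by norm_num)
    · exact ⟨2, Or.inr (by linarith [hγ 2])⟩
    · exact ⟨1, Or.inr (by linarith [hγ 1])⟩
    · exact ⟨0, Or.inr (by linarith [hγ 0])⟩
    · exact ⟨0, Or.inr (by linarith [hγ 0])⟩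
    · exact ⟨1, Or.inr (by linarith [hγ 1])⟩
    · exact ⟨2, Or.inr (by linarith [hγ 2])⟩
    · exact absurd hsb (by norm_num)

theorem projective_measurement_gamma_constraint
    (ρ : Fin 3 → Matrix (Fin 2) (Fin 2) ℂ)
    (hρ : ∀ i, (ρ i).PosSemidef ∧ (ρ i).trace = 1)
    (v : Fin 2 → (Fin 2 → ℂ))
    (hv : ∀ j j', star (v j) ⬝ᵥ v j' = if j = j' then 1 else 0)
    (PB : Matrix (Fin 2) (Fin 3) ℝ) (hPB : RowStochastic PB)
    (p : Fin 3 → Fin 3 → ℂ)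
    (hp : ∀ k i, p k i = ∑ j, (star (v j) ⬝ᵥ ((ρ i) *ᵥ v j)) * ((PB j k : ℝ) : ℂ))
    (h1 : ∀ i, p i i = 0)
    (γ : Fin 3 → ℝ)
    (hγ : ∀ k, ((γ k : ℝ) : ℂ) = (1/3 : ℂ) * ∑ i, p k i) :
    ∃ j, γ j = 0 ∨ γ j = 2/3 := by
  -- the real quadratic-form values
  set q : Fin 2 → Fin 3 → ℂ := fun j i => star (v j) ⬝ᵥ ((ρ i) *ᵥ v j) with hqdef
  have hq0 : ∀ j i, 0 ≤ q j i := fun j i => (hρ i).1.dotProduct_mulVec_nonneg (v j)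
  set r : Fin 2 → Fin 3 → ℝ := fun j i => (q j i).re with hrdef
  have hr0 : ∀ j i, 0 ≤ r j i := by
    intro j i
    exact (Complex.le_def.mp (hq0 j i)).1
  have hqr : ∀ j i, q j i = ((r j i : ℝ) : ℂ) := by
    intro j i
    have him := (Complex.le_def.mp (hq0 j i)).2
    apply Complex.ext <;> simp [hrdef, ← him]
  -- the unitary from the orthonormal basis
  set V : Matrix (Fin 2) (Fin 2) ℂ := Matrix.of (fun a b => v b a) with hVdef
  have hVhV : Vᴴ * V = 1 := by
    ext j j'
    have := hv j j'
    simpa [Matrix.mul_apply, Matrix.conjTranspose_apply, dotProduct, hVdef,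
      Matrix.one_apply, mul_comm] using this
  have hVVh : V * Vᴴ = 1 := mul_eq_one_comm.mp hVhV
  have hqsum : ∀ i, r 0 i + r 1 i = 1 := by
    intro i
    have htr : Matrix.trace (Vᴴ * ρ i * V) = 1 := by
      rw [Matrix.trace_mul_cycle, hVVh, Matrix.one_mul, (hρ i).2]
    have hdiag : ∀ j, (Vᴴ * ρ i * V) j j = q j i := by
      intro j
      simp only [hqdef, Matrix.mul_apply, Matrix.mulVec, dotProduct,
        Matrix.conjTranspose_apply, hVdef, Matrix.of_apply, Pi.star_apply,
        Fin.sum_univ_two]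
      ring
    have : q 0 i + q 1 i = 1 := by
      have := htr
      rw [Matrix.trace] at this
      simp only [Matrix.diag, Fin.sum_univ_two, hdiag] at this
      exact this
    rw [hqr 0 i, hqr 1 i] at this
    exact_mod_cast this
  have hqr' : ∀ j i, (star (v j) ⬝ᵥ ((ρ i) *ᵥ v j)) = ((r j i : ℝ) : ℂ) := hqr
  -- p in real form
  have hpr : ∀ k i, p k i = ((r 0 i * PB 0 k + r 1 i * PB 1 k : ℝ) : ℂ) := by
    intro k i
    rw [hp k i, Fin.sum_univ_two, hqr' 0 i, hqr' 1 i]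
    push_cast
    ring
  -- zero conditions
  have hz : ∀ i, r 0 i * PB 0 i = 0 ∧ r 1 i * PB 1 i = 0 := by
    intro i
    have h := h1 i
    rw [hpr i i] at h
    have h' : r 0 i * PB 0 i + r 1 i * PB 1 i = 0 := by exact_mod_cast h
    have h0 : 0 ≤ r 0 i * PB 0 i := mul_nonneg (hr0 0 i) (hPB.1 0 i)
    have h1' : 0 ≤ r 1 i * PB 1 i := mul_nonneg (hr0 1 i) (hPB.1 1 i)
    constructor <;> linarith
  -- gamma in real form
  have h3γ : ∀ k, 3 * γ k = ∑ i, (r 0 i * PB 0 k + (1 - r 0 i) * PB 1 k) := by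
    intro k
    have h := hγ k
    have h' : ((3 * γ k : ℝ) : ℂ) =
        ((∑ i, (r 0 i * PB 0 k + r 1 i * PB 1 k) : ℝ) : ℂ) := by
      rw [Complex.ofReal_mul]
      push_cast
      rw [h]
      simp only [hpr]
      push_cast
      ring
    have h'' : 3 * γ k = ∑ i, (r 0 i * PB 0 k + r 1 i * PB 1 k) := by exact_mod_cast h'
    rw [h'']
    apply Finset.sum_congr rfl
    intro i _
    linear_combination (PB 1 k) * (hqsum i)
  have hsa : ∑ k, PB 0 k = 1 := hPB.2 0
  have hsb : ∑ k, PB 1 k = 1 := hPB.2 1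
  refine key_gamma (fun k => PB 0 k) (fun k => PB 1 k) (fun i => r 0 i) γ hsa hsb
    (fun i => (hz i).1) (fun i => ?_) h3γ
  have := (hz i).2
  have h' : 1 - r 0 i = r 1 i := by linarith [hqsum i]
  rw [h']
  exact this
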